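/- arXiv:1812.09042 — 3 statements merged into one kernel-verified Lean document; each statement's English description precedes it below -/
import Mathlib

section
/- (Eckart–Young–Mirsky for the Frobenius norm) Let A be an n×m real matrix with singular values σ₁ ≥ σ₂ ≥ … ≥ σ_{min(n,m)} and SVD A = U Σ Vᵀ. For any k, the matrix A_k obtained by truncating the SVD to its k largest singular values satisfies ‖A − A_k‖_F² = Σ_{i>k} σᵢ², and for every matrix B of rank at most k, ‖A − B‖_F ≥ ‖A − A_k‖_F. -/
open Matrix
open scoped RealInnerProductSpace

noncomputable section

/-- `Xd` is the Moore–Penrose pseudoinverse of `X` (the four Penrose conditions). -/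
def IsMoorePenrose {n m : ℕ} (X : Matrix (Fin n) (Fin m) ℝ)
    (Xd : Matrix (Fin m) (Fin n) ℝ) : Prop :=
  X * Xd * X = X ∧ Xd * X * Xd = Xd ∧ (X * Xd)ᵀ = X * Xd ∧ (Xd * X)ᵀ = Xd * X

/-- Squared Frobenius norm. -/
def frobSq {n m : ℕ} (A : Matrix (Fin n) (Fin m) ℝ) : ℝ := ∑ i, ∑ j, (A i j) ^ 2

/-- Frobenius norm. -/
def frob {n m : ℕ} (A : Matrix (Fin n) (Fin m) ℝ) : ℝ := Real.sqrt (frobSq A)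

/-- Rectangular diagonal matrix with entries `σ 0, σ 1, …` on the diagonal. -/
def rdiag (n m : ℕ) (σ : ℕ → ℝ) : Matrix (Fin n) (Fin m) ℝ :=
  Matrix.of fun i j => if (i : ℕ) = (j : ℕ) then σ (i : ℕ) else 0

/-- Rectangular diagonal matrix truncated to its first `k` diagonal entries. -/
def rdiagTrunc (n m k : ℕ) (σ : ℕ → ℝ) : Matrix (Fin n) (Fin m) ℝ :=
  Matrix.of fun i j => if (i : ℕ) = (j : ℕ) ∧ (i : ℕ) < k then σ (i : ℕ) else 0

/-- Diagonal projector onto the first `k` coordinates. -/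
def dproj (n k : ℕ) : Matrix (Fin n) (Fin n) ℝ :=
  Matrix.of fun i j => if i = j ∧ (i : ℕ) < k then (1 : ℝ) else 0

/-- `A = U * rdiag σ * Vᵀ` is a singular value decomposition of `A`:
`U`, `V` are orthogonal and the singular values `σ` are nonnegative and nonincreasing. -/
def IsSVDecomp {n m : ℕ} (A : Matrix (Fin n) (Fin m) ℝ) (U : Matrix (Fin n) (Fin n) ℝ)
    (V : Matrix (Fin m) (Fin m) ℝ) (σ : ℕ → ℝ) : Prop :=
  U * Uᵀ = 1 ∧ Uᵀ * U = 1 ∧ V * Vᵀ = 1 ∧ Vᵀ * V = 1 ∧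
  (∀ i, 0 ≤ σ i) ∧ (∀ i j, i ≤ j → σ j ≤ σ i) ∧ (∀ i, min n m ≤ i → σ i = 0) ∧
  A = U * rdiag n m σ * Vᵀ



private lemma qineq (σ q : ℕ → ℝ) (N k : ℕ)
    (hσ0 : ∀ i, 0 ≤ σ i) (hmono : ∀ i j, i ≤ j → σ j ≤ σ i)
    (hq0 : ∀ j, 0 ≤ q j) (hq1 : ∀ j, q j ≤ 1)
    (hsum : ∑ j ∈ Finset.range N, (1 - q j) ≤ (k : ℝ)) :
    ∑ j ∈ Finset.Ico k N, σ j ^ 2 ≤ ∑ j ∈ Finset.range N, σ j ^ 2 * q j := by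
  by_cases hkN : N ≤ k
  · rw [Finset.Ico_eq_empty (by omega), Finset.sum_empty]
    exact Finset.sum_nonneg fun j _ => mul_nonneg (sq_nonneg _) (hq0 j)
  · push_neg at hkN
    have hsplit : Finset.range N = Finset.range k ∪ Finset.Ico k N := by
      simp only [Finset.range_eq_Ico]
      rw [Finset.Ico_union_Ico_eq_Ico (Nat.zero_le k) hkN.le]
    have hdisj : Disjoint (Finset.range k) (Finset.Ico k N) := by
      simp only [Finset.disjoint_left, Finset.mem_range, Finset.mem_Ico]
      omega
    have hsq : ∀ i j : ℕ, i ≤ j → σ j ^ 2 ≤ σ i ^ 2 := fun i j hij =>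
      pow_le_pow_left₀ (hσ0 j) (hmono i j hij) 2
    have h2 : ∑ j ∈ Finset.Ico k N, (1 - q j) ≤ ∑ j ∈ Finset.range k, q j := by
      have := hsum
      rw [hsplit, Finset.sum_union hdisj] at this
      have hk' : ∑ j ∈ Finset.range k, (1 - q j) = k - ∑ j ∈ Finset.range k, q j := by
        rw [Finset.sum_sub_distrib, Finset.sum_const, Finset.card_range, nsmul_eq_mul, mul_one]
      linarith
    have h1 : ∑ j ∈ Finset.Ico k N, σ j ^ 2 * (1 - q j)
        ≤ σ k ^ 2 * ∑ j ∈ Finset.Ico k N, (1 - q j) := by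
      rw [Finset.mul_sum]
      refine Finset.sum_le_sum fun j hj => ?_
      rw [Finset.mem_Ico] at hj
      exact mul_le_mul_of_nonneg_right (hsq k j hj.1) (by linarith [hq1 j])
    have h3 : σ k ^ 2 * ∑ j ∈ Finset.range k, q j ≤ ∑ j ∈ Finset.range k, σ j ^ 2 * q j := by
      rw [Finset.mul_sum]
      refine Finset.sum_le_sum fun j hj => ?_
      rw [Finset.mem_range] at hj
      exact mul_le_mul_of_nonneg_right (hsq j k hj.le) (hq0 j)
    have h4 : 0 ≤ ∑ j ∈ Finset.Ico k N, (1 - q j) :=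
      Finset.sum_nonneg fun j _ => by linarith [hq1 j]
    have hσk : (0:ℝ) ≤ σ k ^ 2 := sq_nonneg _
    have h5 : σ k ^ 2 * ∑ j ∈ Finset.Ico k N, (1 - q j) ≤ σ k ^2 * ∑ j ∈ Finset.range k, q j :=
      mul_le_mul_of_nonneg_left h2 hσk
    have hexp : ∑ j ∈ Finset.Ico k N, σ j ^ 2
        = ∑ j ∈ Finset.Ico k N, σ j ^ 2 * q j + ∑ j ∈ Finset.Ico k N, σ j ^ 2 * (1 - q j) := by
      rw [← Finset.sum_add_distrib]
      exact Finset.sum_congr rfl fun j _ => by ring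
    rw [hsplit, Finset.sum_union hdisj]
    linarith

private lemma normsq_eucl {n : ℕ} (x : EuclideanSpace ℝ (Fin n)) : ‖x‖ ^ 2 = ∑ i, x i ^ 2 := by
  rw [EuclideanSpace.norm_eq, Real.sq_sqrt (by positivity)]
  exact Finset.sum_congr rfl fun i _ => by rw [Real.norm_eq_abs, sq_abs]

set_option maxHeartbeats 2000000 in
private lemma key_lower {n m k : ℕ} (σ : ℕ → ℝ)
    (hσ0 : ∀ i, 0 ≤ σ i) (hmono : ∀ i j, i ≤ j → σ j ≤ σ i)
    (B : Matrix (Fin n) (Fin m) ℝ) (hB : B.rank ≤ k) :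
    ∑ i ∈ Finset.Ico k (min n m), σ i ^ 2 ≤ frobSq (rdiag n m σ - B) := by
  classical
  let W : Submodule ℝ (EuclideanSpace ℝ (Fin n)) :=
    LinearMap.range ((WithLp.linearEquiv 2 ℝ (Fin n → ℝ)).symm.toLinearMap ∘ₗ B.mulVecLin)
  have hWrank : Module.finrank ℝ W ≤ k := by
    show Module.finrank ℝ (LinearMap.range (_ ∘ₗ B.mulVecLin)) ≤ k
    rw [LinearMap.range_comp, LinearEquiv.finrank_map_eq]; exact hB
  let Bc : Fin m → EuclideanSpace ℝ (Fin n) := fun j => WithLp.toLp 2 (fun i => B i j)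
  have hcolB : ∀ j : Fin m, Bc j ∈ W := by
    intro j
    refine ⟨Pi.single j 1, ?_⟩
    show WithLp.toLp 2 (B.mulVec (Pi.single j 1)) = _
    ext i; simp [Bc]
  -- Pythagoras facts
  have horthW : ∀ (x : EuclideanSpace ℝ (Fin n)) (v : EuclideanSpace ℝ (Fin n)), v ∈ W →
      ⟪x - (W.orthogonalProjectionOnto x : EuclideanSpace ℝ (Fin n)), v⟫ = 0 := by
    intro x v hv
    rw [real_inner_comm]
    exact (Submodule.mem_orthogonal W _).1 (Submodule.sub_starProjection_mem_orthogonal (K := W) x) v hv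
  have hmin : ∀ (x v : EuclideanSpace ℝ (Fin n)), v ∈ W →
      ‖x - (W.orthogonalProjectionOnto x : EuclideanSpace ℝ (Fin n))‖ ^ 2 ≤ ‖x - v‖ ^ 2 := by
    intro x v hv
    have h1 : x - v = (x - (W.orthogonalProjectionOnto x : EuclideanSpace ℝ (Fin n)))
        + ((W.orthogonalProjectionOnto x : EuclideanSpace ℝ (Fin n)) - v) := by abel
    have h2 : ⟪x - (W.orthogonalProjectionOnto x : EuclideanSpace ℝ (Fin n)),
        (W.orthogonalProjectionOnto x : EuclideanSpace ℝ (Fin n)) - v⟫ = 0 :=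
      horthW _ _ (Submodule.sub_mem W (W.orthogonalProjectionOnto x).2 hv)
    rw [h1, norm_add_sq_real, h2]
    nlinarith [sq_nonneg ‖(W.orthogonalProjectionOnto x : EuclideanSpace ℝ (Fin n)) - v‖]
  have hPy : ∀ x : EuclideanSpace ℝ (Fin n), ‖x‖ ^ 2
      = ‖(W.orthogonalProjectionOnto x : EuclideanSpace ℝ (Fin n))‖ ^ 2 + ‖x - W.orthogonalProjectionOnto x‖ ^ 2 := by
    intro x
    have h1 : x = (W.orthogonalProjectionOnto x : EuclideanSpace ℝ (Fin n)) + (x - W.orthogonalProjectionOnto x) := by abel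
    have h2 : ⟪(W.orthogonalProjectionOnto x : EuclideanSpace ℝ (Fin n)), x - (W.orthogonalProjectionOnto x : EuclideanSpace ℝ (Fin n))⟫ = 0 := by
      rw [real_inner_comm]
      exact horthW x _ (W.orthogonalProjectionOnto x).2
    nth_rewrite 1 [h1]
    rw [norm_add_sq_real, h2]
    ring
  -- q
  set e : Fin n → EuclideanSpace ℝ (Fin n) := fun i => EuclideanSpace.single i 1 with he
  set q : ℕ → ℝ := fun t => if h : t < n then
    ‖e ⟨t, h⟩ - W.orthogonalProjectionOnto (e ⟨t, h⟩)‖ ^ 2 else 0 with hq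
  have hq0 : ∀ t, 0 ≤ q t := by
    intro t
    by_cases h : t < n
    · simp only [hq, dif_pos h]; exact sq_nonneg _
    · simp only [hq, dif_neg h]; exact le_rfl
  have hq1 : ∀ t, q t ≤ 1 := by
    intro t
    by_cases h : t < n
    · have hpy := hPy (e ⟨t, h⟩)
      have hnorm : ‖e ⟨t, h⟩‖ = 1 := by
        simp only [he]; rw [EuclideanSpace.norm_single]; norm_num
      rw [hnorm] at hpy
      simp only [hq, dif_pos h]
      nlinarith [sq_nonneg ‖(W.orthogonalProjectionOnto (e ⟨t, h⟩) : EuclideanSpace ℝ (Fin n))‖]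
    · simp only [hq, dif_neg h]; norm_num
  -- sum of projections of basis vectors
  set b := stdOrthonormalBasis ℝ W with hb
  have honb : Orthonormal ℝ (fun t => ((b t : EuclideanSpace ℝ (Fin n)))) :=
    b.orthonormal.comp_linearIsometry W.subtypeₗᵢ
  have hPsum : ∀ x : EuclideanSpace ℝ (Fin n), (W.orthogonalProjectionOnto x : EuclideanSpace ℝ (Fin n))
      = ∑ t, ⟪(b t : EuclideanSpace ℝ (Fin n)), x⟫ • (b t : EuclideanSpace ℝ (Fin n)) := by
    intro x
    rw [b.orthogonalProjectionOnto_apply_eq_sum x]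
    push_cast
    rfl
  have hPnormsq : ∀ x : EuclideanSpace ℝ (Fin n), ‖(W.orthogonalProjectionOnto x : EuclideanSpace ℝ (Fin n))‖ ^ 2
      = ∑ t, ⟪(b t : EuclideanSpace ℝ (Fin n)), x⟫ ^ 2 := by
    intro x
    rw [← real_inner_self_eq_norm_sq, hPsum x,
      honb.inner_sum (fun t => ⟪(b t : EuclideanSpace ℝ (Fin n)), x⟫) (fun t => ⟪(b t : EuclideanSpace ℝ (Fin n)), x⟫) Finset.univ]
    simp [sq]
  have hsumP : ∑ i : Fin n, ‖(W.orthogonalProjectionOnto (e i) : EuclideanSpace ℝ (Fin n))‖ ^ 2 ≤ (k : ℝ) := by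
    have hc : ∑ i : Fin n, ‖(W.orthogonalProjectionOnto (e i) : EuclideanSpace ℝ (Fin n))‖ ^ 2
        = ∑ t, ∑ i : Fin n, ⟪(b t : EuclideanSpace ℝ (Fin n)), e i⟫ ^ 2 := by
      simp_rw [hPnormsq]
      exact Finset.sum_comm
    have hrow : ∀ t, ∑ i : Fin n, ⟪(b t : EuclideanSpace ℝ (Fin n)), e i⟫ ^ 2 = 1 := by
      intro t
      have h1 : ∀ i : Fin n, ⟪(b t : EuclideanSpace ℝ (Fin n)), e i⟫ = (b t : EuclideanSpace ℝ (Fin n)) i := by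
        intro i
        simp only [he]
        rw [EuclideanSpace.inner_single_right]
        simp
      simp_rw [h1]
      rw [← normsq_eucl]
      have := honb.1 t
      rw [this]; norm_num
    rw [hc]
    simp_rw [hrow]
    rw [Finset.sum_const, Finset.card_univ, Fintype.card_fin, nsmul_eq_mul, mul_one]
    exact_mod_cast hWrank
  have honeminus : ∀ i : Fin n, 1 - q (i : ℕ)
      = ‖(W.orthogonalProjectionOnto (e i) : EuclideanSpace ℝ (Fin n))‖ ^ 2 := by
    intro i
    have hpy := hPy (e i)
    have hnorm : ‖e i‖ = 1 := by
      simp only [he]; rw [EuclideanSpace.norm_single]; norm_num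
    rw [hnorm] at hpy
    have hqi : q (i : ℕ) = ‖e i - W.orthogonalProjectionOnto (e i)‖ ^ 2 := by
      simp only [hq, dif_pos i.isLt]
    rw [hqi]
    nlinarith
  have hsumq : ∑ t ∈ Finset.range n, (1 - q t) ≤ (k : ℝ) := by
    rw [← Fin.sum_univ_eq_sum_range (fun t => 1 - q t) n]
    calc ∑ i : Fin n, (1 - q (i : ℕ))
        = ∑ i : Fin n, ‖(W.orthogonalProjectionOnto (e i) : EuclideanSpace ℝ (Fin n))‖ ^ 2 :=
          Finset.sum_congr rfl fun i _ => honeminus i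
      _ ≤ (k : ℝ) := hsumP
  -- column bounds
  have hcolbound : ∀ j : Fin m,
      (if ((j : ℕ) < n) then σ (j : ℕ) ^ 2 * q (j : ℕ) else 0)
      ≤ ∑ i : Fin n, ((rdiag n m σ - B) i j) ^ 2 := by
    intro j
    by_cases h : (j : ℕ) < n
    · rw [if_pos h]
      have hcol : (WithLp.toLp 2 (fun i => (rdiag n m σ - B) i j) : EuclideanSpace ℝ (Fin n))
          = (σ (j : ℕ) • e ⟨(j : ℕ), h⟩) - Bc j := by
        ext i
        show rdiag n m σ i j - B i j = σ (j : ℕ) * (e ⟨(j : ℕ), h⟩ i) - B i j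
        have : e ⟨(j : ℕ), h⟩ i = if (i : ℕ) = (j : ℕ) then 1 else 0 := by
          simp only [he]
          rw [EuclideanSpace.single_apply]
          simp [Fin.ext_iff, eq_comm]
        rw [this]
        simp only [rdiag, Matrix.of_apply]
        split_ifs with hij
        · rw [hij, mul_one]
        · rw [mul_zero]
      have hsmul : (σ (j : ℕ) • e ⟨(j : ℕ), h⟩)
          - (W.orthogonalProjectionOnto (σ (j : ℕ) • e ⟨(j : ℕ), h⟩) : EuclideanSpace ℝ (Fin n))
          = σ (j : ℕ) • (e ⟨(j : ℕ), h⟩ - W.orthogonalProjectionOnto (e ⟨(j : ℕ), h⟩)) := by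
        rw [_root_.map_smul, Submodule.coe_smul, smul_sub]
      calc σ (j : ℕ) ^ 2 * q (j : ℕ)
          = ‖(σ (j : ℕ) • e ⟨(j : ℕ), h⟩)
            - (W.orthogonalProjectionOnto (σ (j : ℕ) • e ⟨(j : ℕ), h⟩) : EuclideanSpace ℝ (Fin n))‖ ^ 2 := by
            rw [hsmul, norm_smul, Real.norm_eq_abs, mul_pow, sq_abs]
            simp only [hq, dif_pos h]
        _ ≤ ‖(σ (j : ℕ) • e ⟨(j : ℕ), h⟩) - Bc j‖ ^ 2 :=
            hmin _ _ (hcolB j)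
        _ = ∑ i : Fin n, ((rdiag n m σ - B) i j) ^ 2 := by
            rw [← hcol, normsq_eucl]
    · rw [if_neg h]
      positivity
  -- assemble
  have hfr : frobSq (rdiag n m σ - B)
      = ∑ j : Fin m, ∑ i : Fin n, ((rdiag n m σ - B) i j) ^ 2 := Finset.sum_comm
  have hsub1 : Finset.range (min n m) ⊆ Finset.range n :=
    Finset.range_subset_range.2 (Nat.min_le_left n m)
  have hmain := qineq σ q (min n m) k hσ0 hmono hq0 hq1
    (le_trans (Finset.sum_le_sum_of_subset_of_nonneg hsub1
      (fun t _ _ => by linarith [hq1 t])) hsumq)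
  have hg : ∑ t ∈ Finset.range (min n m), σ t ^ 2 * q t
      = ∑ j : Fin m, (if ((j : ℕ) < n) then σ (j : ℕ) ^ 2 * q (j : ℕ) else 0) := by
    rw [Fin.sum_univ_eq_sum_range (fun t => if t < n then σ t ^ 2 * q t else 0) m]
    rw [← Finset.sum_subset (Finset.range_subset_range.2 (Nat.min_le_right n m))
      (fun t ht hts => if_neg (by simp only [Finset.mem_range] at ht hts; omega))]
    exact Finset.sum_congr rfl fun t ht =>
      (if_pos (lt_of_lt_of_le (Finset.mem_range.1 ht) (Nat.min_le_left n m))).symm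
  calc ∑ i ∈ Finset.Ico k (min n m), σ i ^ 2
      ≤ ∑ t ∈ Finset.range (min n m), σ t ^ 2 * q t := hmain
    _ = ∑ j : Fin m, (if ((j : ℕ) < n) then σ (j : ℕ) ^ 2 * q (j : ℕ) else 0) := hg
    _ ≤ ∑ j : Fin m, ∑ i : Fin n, ((rdiag n m σ - B) i j) ^ 2 :=
        Finset.sum_le_sum fun j _ => hcolbound j
    _ = frobSq (rdiag n m σ - B) := hfr.symm

private lemma frobSq_trace {n m : ℕ} (M : Matrix (Fin n) (Fin m) ℝ) :
    frobSq M = Matrix.trace (Mᵀ * M) := by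
  unfold frobSq
  rw [Matrix.trace]
  simp only [Matrix.diag_apply, Matrix.mul_apply, Matrix.transpose_apply, sq]
  exact Finset.sum_comm

private lemma frobSq_conj {n m : ℕ} (U : Matrix (Fin n) (Fin n) ℝ)
    (M : Matrix (Fin n) (Fin m) ℝ) (V : Matrix (Fin m) (Fin m) ℝ)
    (hU : Uᵀ * U = 1) (hV : Vᵀ * V = 1) :
    frobSq (U * M * Vᵀ) = frobSq M := by
  rw [frobSq_trace, frobSq_trace M]
  have h1 : (U * M * Vᵀ)ᵀ * (U * M * Vᵀ) = V * (Mᵀ * M) * Vᵀ := by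
    have : (U * M * Vᵀ)ᵀ = V * (Mᵀ * Uᵀ) := by
      simp [Matrix.transpose_mul, Matrix.mul_assoc]
    rw [this]
    calc V * (Mᵀ * Uᵀ) * (U * M * Vᵀ)
        = V * (Mᵀ * ((Uᵀ * U) * (M * Vᵀ))) := by simp only [Matrix.mul_assoc]
      _ = V * (Mᵀ * M) * Vᵀ := by rw [hU, Matrix.one_mul]; simp only [Matrix.mul_assoc]
  rw [h1, Matrix.mul_assoc, Matrix.trace_mul_comm, Matrix.mul_assoc, hV, Matrix.mul_one]

private lemma frobSq_diag_tail {n m k : ℕ} (σ : ℕ → ℝ) :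
    frobSq (rdiag n m σ - rdiagTrunc n m k σ) = ∑ i ∈ Finset.Ico k (min n m), σ i ^ 2 := by
  have hentry : ∀ (i : Fin n) (j : Fin m), (rdiag n m σ - rdiagTrunc n m k σ) i j
      = if ((i : ℕ) = (j : ℕ) ∧ k ≤ (i : ℕ)) then σ (i : ℕ) else 0 := by
    intro i j
    show rdiag n m σ i j - rdiagTrunc n m k σ i j = _
    simp only [rdiag, rdiagTrunc, Matrix.of_apply]
    by_cases h1 : (i : ℕ) = (j : ℕ)
    · by_cases h2 : (i : ℕ) < k
      · rw [if_pos h1, if_pos ⟨h1, h2⟩, if_neg (by omega), sub_self]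
      · rw [if_pos h1, if_neg (fun hc => h2 hc.2), if_pos ⟨h1, by omega⟩, sub_zero]
    · rw [if_neg h1, if_neg (fun hc => h1 hc.1), if_neg (fun hc => h1 hc.1), sub_zero]
  have hrow : ∀ i : Fin n, (∑ j : Fin m, ((rdiag n m σ - rdiagTrunc n m k σ) i j) ^ 2)
      = if ((i : ℕ) < m ∧ k ≤ (i : ℕ)) then σ (i : ℕ) ^ 2 else 0 := by
    intro i
    by_cases h : (i : ℕ) < m
    · rw [Finset.sum_eq_single (⟨(i : ℕ), h⟩ : Fin m)]
      · rw [hentry]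
        by_cases hk : k ≤ (i : ℕ) <;> simp [h, hk]
      · intro j _ hj
        have hne : (i : ℕ) ≠ (j : ℕ) := fun hc => hj (Fin.ext hc.symm)
        rw [hentry, if_neg (fun hc => hne hc.1)]
        norm_num
      · intro habs
        exact absurd (Finset.mem_univ _) habs
    · have hz : ∀ j : Fin m, (i : ℕ) ≠ (j : ℕ) := by
        intro j hc
        exact h (hc ▸ j.isLt)
      rw [if_neg (by omega)]
      refine Finset.sum_eq_zero fun j _ => ?_
      rw [hentry, if_neg (by exact fun hc => hz j hc.1)]
      norm_num
  unfold frobSq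
  simp_rw [hrow]
  rw [Fin.sum_univ_eq_sum_range (fun t => if (t < m ∧ k ≤ t) then σ t ^ 2 else 0) n]
  rw [← Finset.sum_subset (s₁ := Finset.Ico k (min n m))
    (fun t ht => Finset.mem_range.2 (lt_of_lt_of_le (Finset.mem_Ico.1 ht).2 (Nat.min_le_left n m)))
    (fun t ht hts => by
      simp only [Finset.mem_range] at ht
      simp only [Finset.mem_Ico] at hts
      rw [if_neg (by omega)])]
  exact Finset.sum_congr rfl fun t ht => by
    simp only [Finset.mem_Ico] at ht
    rw [if_pos ⟨lt_of_lt_of_le ht.2 (Nat.min_le_right n m), ht.1⟩]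

/-- Eckart–Young–Mirsky, Frobenius norm: for the rank-`k` SVD
truncation `A_k = U (Σ truncated to k) Vᵀ`, one has
`‖A − A_k‖_F² = Σ_{i > k} σᵢ²`, and `‖A − B‖_F ≥ ‖A − A_k‖_F` for every `B`
of rank at most `k`. -/
theorem eckart_young_mirsky_frobenius {n m k : ℕ}
    (A : Matrix (Fin n) (Fin m) ℝ)
    (U : Matrix (Fin n) (Fin n) ℝ) (V : Matrix (Fin m) (Fin m) ℝ) (σ : ℕ → ℝ)
    (hSVD : IsSVDecomp A U V σ)
    (Ak : Matrix (Fin n) (Fin m) ℝ) (hAk : Ak = U * rdiagTrunc n m k σ * Vᵀ) :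
    frobSq (A - Ak) = ∑ i ∈ Finset.Ico k (min n m), σ i ^ 2 ∧
    ∀ B : Matrix (Fin n) (Fin m) ℝ, B.rank ≤ k → frob (A - Ak) ≤ frob (A - B) := by
  obtain ⟨hUUt, hUtU, hVVt, hVtV, hσ0, hmono, hzero, hA⟩ := hSVD
  have hdiff : ∀ C : Matrix (Fin n) (Fin m) ℝ,
      A - U * C * Vᵀ = U * (rdiag n m σ - C) * Vᵀ := by
    intro C
    rw [hA, Matrix.mul_sub, Matrix.sub_mul]
  have hpart1 : frobSq (A - Ak) = ∑ i ∈ Finset.Ico k (min n m), σ i ^ 2 := by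
    rw [hAk, hdiff, frobSq_conj _ _ _ hUtU hVtV, frobSq_diag_tail]
  refine ⟨hpart1, fun B hB => ?_⟩
  have hAB : A - B = U * (rdiag n m σ - Uᵀ * B * V) * Vᵀ := by
    rw [← hdiff]
    congr 1
    calc B = (U * Uᵀ) * B * (V * Vᵀ) := by
          rw [hUUt, hVVt, Matrix.one_mul, Matrix.mul_one]
      _ = U * (Uᵀ * B * V) * Vᵀ := by simp only [Matrix.mul_assoc]
  have hrank : (Uᵀ * B * V).rank ≤ k :=
    le_trans (le_trans (Matrix.rank_mul_le_left _ _) (Matrix.rank_mul_le_right _ _)) hB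
  have hlow := key_lower σ hσ0 hmono (Uᵀ * B * V) hrank
  have h2 : frobSq (A - B) = frobSq (rdiag n m σ - Uᵀ * B * V) := by
    rw [hAB, frobSq_conj _ _ _ hUtU hVtV]
  unfold frob
  apply Real.sqrt_le_sqrt
  rw [hpart1, h2]
  exact hlow
end
end

section
/- Let X, Y be n×m real matrices, let Z = Y X† X, and let P_k = Σ_{i=1}^{k} uᵢ uᵢᵀ be the orthogonal projector onto the span of the first k left singular vectors of Z. Then M_k⋆ = P_k Y X† is a minimizer of ‖Y − M X‖_F over all n×n matrices M of rank at most k. -/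
open Matrix

noncomputable section

/-! ### Auxiliary lemmas -/

lemma exists_proj {n m k : ℕ} (C : Matrix (Fin n) (Fin m) ℝ) (hC : C.rank ≤ k) :
    ∃ P : Matrix (Fin n) (Fin n) ℝ, Pᵀ = P ∧ P * P = P ∧ P * C = C ∧ P.trace ≤ (k : ℝ) := by
  classical
  set S : Submodule ℝ (EuclideanSpace ℝ (Fin n)) := (LinearMap.range C.mulVecLin).map
    (WithLp.linearEquiv 2 ℝ (Fin n → ℝ)).symm.toLinearMap with hS
  have hfr : Module.finrank ℝ S = C.rank := LinearEquiv.finrank_map_eq _ _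
  set r := Module.finrank ℝ S with hr
  let b : OrthonormalBasis (Fin r) ℝ S := stdOrthonormalBasis ℝ S
  let v : Fin r → (Fin n → ℝ) := fun i => ((b i : S) : EuclideanSpace ℝ (Fin n))
  have hortho : ∀ i j : Fin r, (∑ a, v i a * v j a) = if i = j then (1:ℝ) else 0 := by
    intro i j
    have h1 := b.orthonormal
    rw [orthonormal_iff_ite] at h1
    have h2 := h1 i j
    rw [Submodule.coe_inner] at h2
    simp [PiLp.inner_apply, RCLike.inner_apply, v] at h2
    rw [← h2]
    exact Finset.sum_congr rfl fun _ _ => mul_comm _ _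
  have hrepr : ∀ x : EuclideanSpace ℝ (Fin n), x ∈ S → ∀ a : Fin n,
      (∑ i, (∑ c, v i c * x c) * v i a) = x a := by
    intro x hx a
    have h1 := b.sum_repr ⟨x, hx⟩
    have h2 : ∀ i, b.repr ⟨x, hx⟩ i = ∑ c, v i c * x c := by
      intro i
      rw [b.repr_apply_apply, Submodule.coe_inner]
      simp [PiLp.inner_apply, RCLike.inner_apply, v]
      exact Finset.sum_congr rfl fun _ _ => mul_comm _ _
    have h1' : ∑ i : Fin r, (b.repr ⟨x, hx⟩ i) • v i = (x : Fin n → ℝ) := by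
      have h3 := congrArg (Subtype.val) h1
      rw [AddSubmonoidClass.coe_finset_sum] at h3
      simp only [SetLike.val_smul] at h3
      conv_rhs => rw [← h3]
      simp [v]
    have h4 := congrFun h1' a
    simp only [Finset.sum_apply, Pi.smul_apply, smul_eq_mul] at h4
    rw [← h4]
    exact Finset.sum_congr rfl fun i _ => by rw [h2 i]
  refine ⟨∑ i, vecMulVec (v i) (v i), ?_, ?_, ?_, ?_⟩
  · ext a c
    simp only [transpose_apply, Matrix.sum_apply, vecMulVec_apply]
    exact Finset.sum_congr rfl fun i _ => mul_comm _ _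
  · ext a c
    simp only [mul_apply, Matrix.sum_apply, vecMulVec_apply, Finset.sum_mul, Finset.mul_sum]
    rw [Finset.sum_comm]
    refine Finset.sum_congr rfl fun i _ => ?_
    rw [Finset.sum_comm]
    have h4 : ∀ j : Fin r, (∑ bb : Fin n, v j a * v j bb * (v i bb * v i c))
        = (∑ bb : Fin n, v j bb * v i bb) * (v j a * v i c) := by
      intro j
      rw [Finset.sum_mul]
      exact Finset.sum_congr rfl fun bb _ => by ring
    simp_rw [h4, hortho]
    simp
  · ext a j
    have hcol : (WithLp.toLp 2 (fun bb => C bb j) : EuclideanSpace ℝ (Fin n)) ∈ S := by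
      rw [hS]
      have hmem : (fun bb => C bb j) ∈ LinearMap.range C.mulVecLin := ⟨Pi.single j 1, funext fun bb =>
        show (C *ᵥ Pi.single j 1) bb = C bb j by rw [Matrix.mulVec_single]; exact mul_one _⟩
      exact Submodule.mem_map_of_mem hmem
    have h5 := hrepr _ hcol a
    simp only [PiLp.toLp_apply] at h5
    simp only [mul_apply, Matrix.sum_apply, vecMulVec_apply]
    rw [← h5]
    simp_rw [Finset.sum_mul]
    rw [Finset.sum_comm]
    refine Finset.sum_congr rfl fun i _ => Finset.sum_congr rfl fun x _ => by ring
  · have h6 : (∑ i, vecMulVec (v i) (v i)).trace = ∑ i : Fin r, (∑ a, v i a * v i a) := by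
      simp only [Matrix.trace, Matrix.diag, Matrix.sum_apply, vecMulVec_apply]
      rw [Finset.sum_comm]
    rw [h6]
    simp_rw [hortho]
    simp only [if_true, Finset.sum_const, Finset.card_univ, Fintype.card_fin, nsmul_eq_mul,
      mul_one]
    exact_mod_cast hfr ▸ hC

lemma sum_weight_le (c t : ℕ → ℝ) (k N : ℕ) (hc0 : ∀ i, 0 ≤ c i)
    (hmono : ∀ i j, i ≤ j → c j ≤ c i) (ht0 : ∀ j, 0 ≤ t j) (ht1 : ∀ j, t j ≤ 1)
    (hsum : ∑ j ∈ Finset.range N, t j ≤ (k : ℝ)) :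
    ∑ j ∈ Finset.range N, c j * t j ≤ ∑ j ∈ Finset.range (min N k), c j := by
  rcases le_or_gt N k with hk | hk
  · rw [min_eq_left hk]
    exact Finset.sum_le_sum fun j _ => mul_le_of_le_one_right (hc0 j) (ht1 j)
  · rw [min_eq_right hk.le]
    have e1 : ∑ j ∈ Finset.range k, t j + ∑ j ∈ Finset.Ico k N, t j
        = ∑ j ∈ Finset.range N, t j := Finset.sum_range_add_sum_Ico _ hk.le
    have e2 : ∑ j ∈ Finset.range k, c j * t j + ∑ j ∈ Finset.Ico k N, c j * t j
        = ∑ j ∈ Finset.range N, c j * t j := Finset.sum_range_add_sum_Ico _ hk.le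
    have b1 : ∑ j ∈ Finset.Ico k N, c j * t j ≤ ∑ j ∈ Finset.Ico k N, c k * t j :=
      Finset.sum_le_sum fun j hj =>
        mul_le_mul_of_nonneg_right (hmono k j (Finset.mem_Ico.mp hj).1) (ht0 j)
    rw [← Finset.mul_sum] at b1
    have b3 : c k * ∑ j ∈ Finset.Ico k N, t j
        ≤ c k * ((k : ℝ) - ∑ j ∈ Finset.range k, t j) :=
      mul_le_mul_of_nonneg_left (by linarith) (hc0 k)
    have b4 : c k * ((k : ℝ) - ∑ j ∈ Finset.range k, t j)
        = ∑ j ∈ Finset.range k, c k * (1 - t j) := by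
      have hke : (k:ℝ) = ∑ _j ∈ Finset.range k, (1:ℝ) := by simp
      rw [hke, ← Finset.sum_sub_distrib, Finset.mul_sum]
    have b5 : ∑ j ∈ Finset.range k, c k * (1 - t j) ≤ ∑ j ∈ Finset.range k, c j * (1 - t j) :=
      Finset.sum_le_sum fun j hj =>
        mul_le_mul_of_nonneg_right (hmono j k (Finset.mem_range.mp hj).le)
          (by linarith [ht1 j])
    have b6 : ∑ j ∈ Finset.range k, c j * t j + ∑ j ∈ Finset.range k, c j * (1 - t j)
        = ∑ j ∈ Finset.range k, c j := by
      rw [← Finset.sum_add_distrib]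
      exact Finset.sum_congr rfl fun j _ => by ring
    linarith

lemma frobSq_eq_trace {n m : ℕ} (A : Matrix (Fin n) (Fin m) ℝ) :
    frobSq A = (A * Aᵀ).trace := by
  simp [frobSq, Matrix.trace, Matrix.diag, mul_apply, sq]

lemma frobSq_nonneg {n m : ℕ} (A : Matrix (Fin n) (Fin m) ℝ) : 0 ≤ frobSq A :=
  Finset.sum_nonneg fun _ _ => Finset.sum_nonneg fun _ _ => sq_nonneg _

lemma frobSq_add_of_orth {n m : ℕ} (A B : Matrix (Fin n) (Fin m) ℝ)
    (h : A * Bᵀ = 0) : frobSq (A + B) = frobSq A + frobSq B := by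
  have h2 : B * Aᵀ = 0 := by
    have := congrArg Matrix.transpose h
    rwa [transpose_mul, transpose_transpose, transpose_zero] at this
  simp [frobSq_eq_trace, Matrix.add_mul, Matrix.mul_add, transpose_add, h, h2]

lemma frobSq_mul_left {n p m : ℕ} (Q : Matrix (Fin n) (Fin p) ℝ)
    (A : Matrix (Fin p) (Fin m) ℝ) :
    frobSq (Q * A) = (Aᵀ * (Qᵀ * Q) * A).trace := by
  rw [frobSq_eq_trace, transpose_mul, Matrix.trace_mul_comm]
  rw [Matrix.mul_assoc, Matrix.mul_assoc, Matrix.mul_assoc]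

lemma frobSq_orth_left {n m : ℕ} (U : Matrix (Fin n) (Fin n) ℝ) (hU : Uᵀ * U = 1)
    (A : Matrix (Fin n) (Fin m) ℝ) : frobSq (U * A) = frobSq A := by
  rw [frobSq_mul_left, hU, Matrix.mul_one, frobSq_eq_trace, Matrix.trace_mul_comm]

lemma frobSq_orth_right {n m : ℕ} (V : Matrix (Fin m) (Fin m) ℝ) (hV : V * Vᵀ = 1)
    (A : Matrix (Fin n) (Fin m) ℝ) : frobSq (A * V) = frobSq A := by
  rw [frobSq_eq_trace, transpose_mul, frobSq_eq_trace]
  rw [Matrix.mul_assoc, ← Matrix.mul_assoc V, hV, Matrix.one_mul]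

lemma frobSq_proj_split {n m : ℕ} (P : Matrix (Fin n) (Fin n) ℝ)
    (hPt : Pᵀ = P) (hPP : P * P = P) (A : Matrix (Fin n) (Fin m) ℝ) :
    frobSq A = frobSq (P * A) + frobSq ((1 - P) * A) := by
  have h1 : frobSq (P * A) = (Aᵀ * P * A).trace := by
    rw [frobSq_mul_left, hPt, hPP]
  have h2 : frobSq ((1 - P) * A) = (Aᵀ * (1 - P) * A).trace := by
    rw [frobSq_mul_left]
    congr 2
    have hP0 : P * (1 - P) = 0 := by rw [Matrix.mul_sub, Matrix.mul_one, hPP, sub_self]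
    rw [transpose_sub, transpose_one, hPt, Matrix.sub_mul, Matrix.mul_sub, Matrix.one_mul, hP0,
      Matrix.mul_zero, sub_zero]
  rw [h1, h2, ← Matrix.trace_add]
  rw [frobSq_eq_trace, Matrix.trace_mul_comm]
  congr 1
  rw [Matrix.mul_sub, Matrix.mul_one, Matrix.sub_mul]
  abel

lemma fin_sum_ite_right {m : ℕ} (p : ℕ) (f : Fin m → ℝ) :
    ∑ j : Fin m, (if p = (j : ℕ) then f j else 0) = if h : p < m then f ⟨p, h⟩ else 0 := by
  by_cases h : p < m
  · rw [dif_pos h, Finset.sum_eq_single (⟨p, h⟩ : Fin m)]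
    · simp
    · intro j _ hj
      rw [if_neg fun hpj => hj (Fin.ext hpj.symm)]
    · intro hmem; exact absurd (Finset.mem_univ _) hmem
  · rw [dif_neg h]
    exact Finset.sum_eq_zero fun j _ => if_neg fun hpj => h (lt_of_eq_of_lt hpj j.isLt)

lemma fin_sum_ite_left {m : ℕ} (p : ℕ) (f : Fin m → ℝ) :
    ∑ j : Fin m, (if (j : ℕ) = p then f j else 0) = if h : p < m then f ⟨p, h⟩ else 0 := by
  rw [← fin_sum_ite_right p f]
  exact Finset.sum_congr rfl fun j _ => if_congr eq_comm rfl rfl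

lemma range_ite_sum (N k : ℕ) (g : ℕ → ℝ) :
    ∑ j ∈ Finset.range N, (if j < k then g j else 0) = ∑ j ∈ Finset.range (min N k), g j := by
  rw [← Finset.sum_filter]
  congr 1
  ext a
  simp [Nat.lt_min]

lemma frobSq_diaglike {n m : ℕ} (g : ℕ → ℝ) :
    frobSq (Matrix.of fun (i : Fin n) (j : Fin m) => if (i : ℕ) = (j : ℕ) then g (i : ℕ) else 0)
      = ∑ j ∈ Finset.range (min n m), g j ^ 2 := by
  have h1 : ∀ i : Fin n, ∑ j : Fin m, (if (i : ℕ) = (j : ℕ) then g (i : ℕ) else 0) ^ 2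
      = if (i : ℕ) < m then g (i : ℕ) ^ 2 else 0 := by
    intro i
    have := fin_sum_ite_right (m := m) (i : ℕ) (fun _ => g (i : ℕ) ^ 2)
    rw [dite_eq_ite] at this
    rw [← this]
    exact Finset.sum_congr rfl fun j _ => by split <;> simp
  calc frobSq _ = ∑ i : Fin n, ((fun p => if p < m then g p ^ 2 else 0) (i : ℕ)) := by
        unfold frobSq
        exact Finset.sum_congr rfl fun i _ => h1 i
    _ = ∑ j ∈ Finset.range n, (if j < m then g j ^ 2 else 0) :=
        Fin.sum_univ_eq_sum_range (fun p => if p < m then g p ^ 2 else 0) n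
    _ = ∑ j ∈ Finset.range (min n m), g j ^ 2 := range_ite_sum n m _

lemma proj_diag_key {n : ℕ} (P : Matrix (Fin n) (Fin n) ℝ) (hPt : Pᵀ = P) (hPP : P * P = P)
    (j : Fin n) : ∑ a, P a j ^ 2 = P j j := by
  have h := congrFun (congrFun hPP j) j
  rw [mul_apply] at h
  rw [← h]
  refine Finset.sum_congr rfl fun a _ => ?_
  have h2 : P j a = P a j := congrFun (congrFun hPt a) j
  rw [h2, sq]

lemma proj_diag_nonneg {n : ℕ} (P : Matrix (Fin n) (Fin n) ℝ) (hPt : Pᵀ = P) (hPP : P * P = P)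
    (j : Fin n) : 0 ≤ P j j := by
  rw [← proj_diag_key P hPt hPP j]
  exact Finset.sum_nonneg fun a _ => sq_nonneg _

lemma proj_diag_le_one {n : ℕ} (P : Matrix (Fin n) (Fin n) ℝ) (hPt : Pᵀ = P) (hPP : P * P = P)
    (j : Fin n) : P j j ≤ 1 := by
  have h1 : P j j ^ 2 ≤ ∑ a, P a j ^ 2 :=
    Finset.single_le_sum (fun a _ => sq_nonneg (P a j)) (Finset.mem_univ j)
  rw [proj_diag_key P hPt hPP j] at h1
  nlinarith [proj_diag_nonneg P hPt hPP j]

lemma rank_dproj_le (n k : ℕ) : (dproj n k).rank ≤ k := by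
  classical
  set E : Matrix (Fin n) (Fin k) ℝ :=
    Matrix.of fun i j => if (i : ℕ) = (j : ℕ) then (1 : ℝ) else 0 with hEdef
  have hE : dproj n k = E * Eᵀ := by
    ext i i'
    rw [mul_apply]
    simp only [hEdef, of_apply, transpose_apply, ite_mul, one_mul, zero_mul]
    rw [fin_sum_ite_right (i : ℕ) (fun j => if (i' : ℕ) = (j : ℕ) then (1:ℝ) else 0)]
    by_cases h : (i : ℕ) < k
    · rw [dif_pos h]
      simp [dproj, Fin.ext_iff, h, eq_comm]
    · rw [dif_neg h]
      simp [dproj, h]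
  rw [hE]
  exact le_trans (Matrix.rank_mul_le_left E Eᵀ)
    (le_trans (Matrix.rank_le_card_width E) (by simp))

lemma frobSq_P_rdiag {n m : ℕ} (P : Matrix (Fin n) (Fin n) ℝ) (hPt : Pᵀ = P) (hPP : P * P = P)
    (σ : ℕ → ℝ) :
    frobSq (P * rdiag n m σ)
      = ∑ j ∈ Finset.range (min n m),
          σ j ^ 2 * (if h : j < n then P ⟨j, h⟩ ⟨j, h⟩ else 0) := by
  have hentry : ∀ (i : Fin n) (j : Fin m), (P * rdiag n m σ) i j
      = if h : (j : ℕ) < n then P i ⟨(j : ℕ), h⟩ * σ (j : ℕ) else 0 := by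
    intro i j
    rw [mul_apply]
    rw [← fin_sum_ite_left (m := n) (j : ℕ) (fun a => P i a * σ (a : ℕ))]
    refine Finset.sum_congr rfl fun a _ => ?_
    simp only [rdiag, of_apply, mul_ite, mul_zero]
  have hsq : ∀ (i : Fin n) (j : Fin m), ((P * rdiag n m σ) i j) ^ 2
      = if h : (j : ℕ) < n then σ (j : ℕ) ^ 2 * P i ⟨(j : ℕ), h⟩ ^ 2 else 0 := by
    intro i j
    rw [hentry]
    split <;> [ring; simp]
  have hcol : ∀ j : Fin m, ∑ i : Fin n, ((P * rdiag n m σ) i j) ^ 2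
      = if h : (j : ℕ) < n then σ (j : ℕ) ^ 2 * P ⟨(j : ℕ), h⟩ ⟨(j : ℕ), h⟩ else 0 := by
    intro j
    simp_rw [hsq]
    by_cases h : (j : ℕ) < n
    · simp only [dif_pos h]
      rw [← Finset.mul_sum, proj_diag_key P hPt hPP]
    · simp only [dif_neg h, Finset.sum_const_zero]
  have hswap : frobSq (P * rdiag n m σ)
      = ∑ j : Fin m, ∑ i : Fin n, ((P * rdiag n m σ) i j) ^ 2 := by
    unfold frobSq
    exact Finset.sum_comm
  rw [hswap]
  simp_rw [hcol]
  have h2 : ∑ j : Fin m, (fun p => if h : p < n then σ p ^ 2 * P ⟨p, h⟩ ⟨p, h⟩ else 0) (j : ℕ)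
      = ∑ j ∈ Finset.range m, (if h : j < n then σ j ^ 2 * P ⟨j, h⟩ ⟨j, h⟩ else 0) :=
    Fin.sum_univ_eq_sum_range (fun p => if h : p < n then σ p ^ 2 * P ⟨p, h⟩ ⟨p, h⟩ else 0) m
  rw [h2]
  rw [← Finset.sum_subset (Finset.range_subset_range.mpr (min_le_right n m))]
  · exact Finset.sum_congr rfl fun j hj => by
      have hjn : j < n := lt_of_lt_of_le (Finset.mem_range.mp hj) (min_le_left n m)
      rw [dif_pos hjn, dif_pos hjn]
  · intro j hjm hjnot
    have hjm' := Finset.mem_range.mp hjm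
    have : ¬ j < n := fun hn => hjnot (Finset.mem_range.mpr (Nat.lt_min.mpr ⟨hn, hjm'⟩))
    rw [dif_neg this]

set_option maxHeartbeats 1000000 in
/-- with `Z = Y X† X` and `P_k = Σ_{i≤k} uᵢ uᵢᵀ` the projector onto the
first `k` left singular vectors of `Z`, the matrix `M_k⋆ = P_k Y X†` has rank at
most `k` and minimizes `‖Y − M X‖_F` over all `n×n` matrices of rank at most `k`. -/
theorem projected_solution_is_minimizer {n m k : ℕ}
    (X Y : Matrix (Fin n) (Fin m) ℝ) (Xd : Matrix (Fin m) (Fin n) ℝ)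
    (hXd : IsMoorePenrose X Xd)
    (Uz : Matrix (Fin n) (Fin n) ℝ) (Vz : Matrix (Fin m) (Fin m) ℝ) (σ : ℕ → ℝ)
    (hSVD : IsSVDecomp (Y * Xd * X) Uz Vz σ)
    (Pk : Matrix (Fin n) (Fin n) ℝ) (hPk : Pk = Uz * dproj n k * Uzᵀ)
    (Mk : Matrix (Fin n) (Fin n) ℝ) (hMk : Mk = Pk * Y * Xd) :
    Mk.rank ≤ k ∧
    ∀ M : Matrix (Fin n) (Fin n) ℝ, M.rank ≤ k →
      frob (Y - Mk * X) ≤ frob (Y - M * X) := by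
  classical
  obtain ⟨hXXdX, hXdXXd, hsymXXd, hsymXdX⟩ := hXd
  obtain ⟨hUUt, hUtU, hVVt, hVtV, hσ0, hσmono, hσz, hZ⟩ := hSVD
  constructor
  · -- rank bound
    rw [hMk, hPk]
    have h1 : Uz * dproj n k * Uzᵀ * Y * Xd = Uz * dproj n k * (Uzᵀ * Y * Xd) := by
      simp only [Matrix.mul_assoc]
    rw [h1]
    exact le_trans (Matrix.rank_mul_le_left _ _)
      (le_trans (Matrix.rank_mul_le_right _ _) (rank_dproj_le n k))
  intro M hM
  set Z := Y * Xd * X with hZdef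
  set Q := Xd * X with hQdef
  have hQsym : Qᵀ = Q := hsymXdX
  have hXQ : X * Q = X := by rw [hQdef, ← Matrix.mul_assoc, hXXdX]
  have hYQ : Y * Q = Z := by rw [hQdef, hZdef, ← Matrix.mul_assoc]
  have hZQ : Z * Q = Z := by
    rw [hZdef]
    calc Y * Xd * X * Q = Y * Xd * (X * Q) := by rw [Matrix.mul_assoc]
      _ = Y * Xd * X := by rw [hXQ]
  have hMXQ : ∀ N : Matrix (Fin n) (Fin n) ℝ, N * X * Q = N * X := fun N => by
    rw [Matrix.mul_assoc, hXQ]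
  -- Pythagoras split
  have hsplit : ∀ N : Matrix (Fin n) (Fin n) ℝ,
      frobSq (Y - N * X) = frobSq (Y - Z) + frobSq (Z - N * X) := by
    intro N
    have hAQ : (Y - Z) * Q = 0 := by rw [Matrix.sub_mul, hYQ, hZQ, sub_self]
    have hBQ : (Z - N * X) * Q = Z - N * X := by rw [Matrix.sub_mul, hZQ, hMXQ N]
    have hcross : (Y - Z) * (Z - N * X)ᵀ = 0 := by
      have h1 : (Z - N * X)ᵀ = Q * (Z - N * X)ᵀ := by
        conv_lhs => rw [← hBQ]
        rw [transpose_mul, hQsym]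
      rw [h1, ← Matrix.mul_assoc, hAQ, Matrix.zero_mul]
    have hsum : Y - N * X = (Y - Z) + (Z - N * X) := by abel
    rw [hsum, frobSq_add_of_orth _ _ hcross]
  -- key inequality on frobSq (Z - · X)
  have key : frobSq (Z - Mk * X) ≤ frobSq (Z - M * X) := by
    have hMkX : Mk * X = Pk * Z := by
      rw [hMk, hZdef]; simp only [Matrix.mul_assoc]
    set C := Uzᵀ * (M * X) * Vz with hC
    have hMX : M * X = Uz * C * Vzᵀ := by
      have h2 : Uz * C * Vzᵀ = (Uz * Uzᵀ) * (M * X) * (Vz * Vzᵀ) := by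
        rw [hC]; simp only [Matrix.mul_assoc]
      rw [h2, hUUt, hVVt, Matrix.one_mul, Matrix.mul_one]
    have hrankC : C.rank ≤ k :=
      le_trans (Matrix.rank_mul_le_left _ _)
        (le_trans (Matrix.rank_mul_le_right _ _)
          (le_trans (Matrix.rank_mul_le_left _ _) hM))
    have hR : frobSq (Z - M * X) = frobSq (rdiag n m σ - C) := by
      have h3 : Z - M * X = Uz * (rdiag n m σ - C) * Vzᵀ := by
        rw [hZ, hMX, Matrix.mul_sub, Matrix.sub_mul]
      rw [h3, frobSq_orth_right Vzᵀ (by rwa [transpose_transpose]) _,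
        frobSq_orth_left Uz hUtU]
    have hL : frobSq (Z - Mk * X) = frobSq ((1 - dproj n k) * rdiag n m σ) := by
      have h4 : Z - Mk * X = Uz * ((1 - dproj n k) * rdiag n m σ) * Vzᵀ := by
        rw [hMkX, hPk, hZ]
        rw [Matrix.sub_mul, Matrix.one_mul, Matrix.mul_sub, Matrix.sub_mul]
        congr 1
        simp only [Matrix.mul_assoc]
        congr 2
        rw [← Matrix.mul_assoc Uzᵀ Uz, hUtU, Matrix.one_mul]
      rw [h4, frobSq_orth_right Vzᵀ (by rwa [transpose_transpose]) _,
        frobSq_orth_left Uz hUtU]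
    -- compute LHS value
    have hdiagL : (1 - dproj n k) * rdiag n m σ
        = Matrix.of (fun (i : Fin n) (j : Fin m) =>
            if (i : ℕ) = (j : ℕ) then (if k ≤ (i : ℕ) then σ (i : ℕ) else 0) else 0) := by
      ext i j
      rw [Matrix.sub_mul, Matrix.one_mul, Matrix.sub_apply]
      have hD : (dproj n k * rdiag n m σ) i j
          = if (i : ℕ) < k then rdiag n m σ i j else 0 := by
        rw [mul_apply]
        rw [Finset.sum_eq_single i]
        · simp only [dproj, of_apply]
          by_cases h : (i : ℕ) < k
          · simp [h]
          · simp [h]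
        · intro a _ ha
          simp only [dproj, of_apply]
          rw [if_neg (fun hh => ha hh.1.symm), zero_mul]
        · intro hmem; exact absurd (Finset.mem_univ _) hmem
      rw [hD]
      simp only [rdiag, of_apply]
      by_cases h1 : (i : ℕ) = (j : ℕ)
      · simp only [if_pos h1]
        by_cases h2 : (i : ℕ) < k
        · rw [if_pos h2, if_neg (by omega : ¬ k ≤ (i : ℕ)), sub_self]
        · rw [if_neg h2, if_pos (by omega : k ≤ (i : ℕ)), sub_zero]
      · simp only [if_neg h1]
        simp
    have hLval : frobSq ((1 - dproj n k) * rdiag n m σ)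
        = ∑ j ∈ Finset.range (min n m), σ j ^ 2
          - ∑ j ∈ Finset.range (min (min n m) k), σ j ^ 2 := by
      rw [hdiagL]
      have hd := frobSq_diaglike (n := n) (m := m) (fun p => if k ≤ p then σ p else 0)
      rw [hd]
      have h5 : ∀ j, (if k ≤ j then σ j else 0) ^ 2
          = σ j ^ 2 - (if j < k then σ j ^ 2 else 0) := by
        intro j
        by_cases h : j < k
        · rw [if_pos h, if_neg (Nat.not_le.mpr h)]; ring
        · rw [if_neg h, if_pos (Nat.not_lt.mp h)]; ring
      simp_rw [h5]
      rw [Finset.sum_sub_distrib, range_ite_sum]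
    obtain ⟨P, hPt, hPP, hPC, htr⟩ := exists_proj C hrankC
    have hsplit2 := frobSq_proj_split P hPt hPP (rdiag n m σ - C)
    have hPC0 : (1 - P) * C = 0 := by
      rw [Matrix.sub_mul, Matrix.one_mul, hPC, sub_self]
    have h1PC : (1 - P) * (rdiag n m σ - C) = (1 - P) * rdiag n m σ := by
      rw [Matrix.mul_sub, hPC0, sub_zero]
    have hsplit3 := frobSq_proj_split P hPt hPP (rdiag n m σ)
    have hSig : frobSq (rdiag n m σ) = ∑ j ∈ Finset.range (min n m), σ j ^ 2 :=
      frobSq_diaglike (n := n) (m := m) σ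
    have hPS : frobSq (P * rdiag n m σ)
        = ∑ j ∈ Finset.range (min n m),
            σ j ^ 2 * (if h : j < n then P ⟨j, h⟩ ⟨j, h⟩ else 0) :=
      frobSq_P_rdiag P hPt hPP σ
    have hsumt : ∑ j ∈ Finset.range (min n m),
        (if h : j < n then P ⟨j, h⟩ ⟨j, h⟩ else 0) ≤ (k : ℝ) := by
      have htr2 : ∑ j ∈ Finset.range n, (if h : j < n then P ⟨j, h⟩ ⟨j, h⟩ else 0)
          = P.trace := by
        rw [← Fin.sum_univ_eq_sum_range (fun p => if h : p < n then P ⟨p, h⟩ ⟨p, h⟩ else 0) n]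
        refine Finset.sum_congr rfl fun i _ => ?_
        rw [dif_pos i.isLt]
        simp [Fin.eta]
      refine le_trans ?_ (htr2 ▸ htr)
      refine Finset.sum_le_sum_of_subset_of_nonneg
        (Finset.range_subset_range.mpr (min_le_left n m)) fun j _ _ => ?_
      by_cases h : j < n
      · rw [dif_pos h]; exact proj_diag_nonneg P hPt hPP _
      · rw [dif_neg h]
    have hcomb : ∑ j ∈ Finset.range (min n m),
          σ j ^ 2 * (if h : j < n then P ⟨j, h⟩ ⟨j, h⟩ else 0)
        ≤ ∑ j ∈ Finset.range (min (min n m) k), σ j ^ 2 := by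
      refine sum_weight_le (fun j => σ j ^ 2)
        (fun p => if h : p < n then P ⟨p, h⟩ ⟨p, h⟩ else 0) k (min n m)
        (fun i => sq_nonneg _)
        (fun i j hij => pow_le_pow_left₀ (hσ0 j) (hσmono i j hij) 2)
        (fun j => by
          show 0 ≤ (if h : j < n then P ⟨j, h⟩ ⟨j, h⟩ else 0)
          by_cases h : j < n
          · rw [dif_pos h]; exact proj_diag_nonneg P hPt hPP _
          · rw [dif_neg h])
        (fun j => by
          show (if h : j < n then P ⟨j, h⟩ ⟨j, h⟩ else 0) ≤ 1
          by_cases h : j < n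
          · rw [dif_pos h]; exact proj_diag_le_one P hPt hPP _
          · rw [dif_neg h]; exact zero_le_one)
        hsumt
    -- assemble
    rw [hL, hR, hLval]
    have hge : frobSq (rdiag n m σ - C) ≥ frobSq ((1 - P) * (rdiag n m σ - C)) := by
      rw [hsplit2]
      have := frobSq_nonneg (P * (rdiag n m σ - C))
      linarith
    rw [h1PC] at hge
    have h6 : frobSq ((1 - P) * rdiag n m σ)
        = frobSq (rdiag n m σ) - frobSq (P * rdiag n m σ) := by linarith
    rw [h6, hSig, hPS] at hge
    linarith
  have h7 := hsplit Mk
  have h8 := hsplit M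
  unfold frob
  apply Real.sqrt_le_sqrt
  rw [h7, h8]
  linarith [key]
end
end

section
/- For a Hilbert–Schmidt operator Y : U → V and an orthogonal projection Q : U → U of corank structure given by I − X† X for compact X : U → V, the error term expands as ‖Y ∘ (I − X† X)‖_HS² = Σ_{ℓ > rank(X)} Σᵢ (σᵢ^Y ⟨ψᵢ^Y, ψ_ℓ^X⟩)², where ψ_ℓ^X are the right singular vectors of X and (σᵢ^Y, ψᵢ^Y) are the singular values and right singular vectors of Y. -/
open scoped InnerProductSpace

open Filter Topology in
lemma myParseval {E : Type*} [NormedAddCommGroup E] [InnerProductSpace ℝ E]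
    {v : ℕ → E} (hv : Orthonormal ℝ v) {c : ℕ → ℝ} {a : E}
    (ha : HasSum (fun i => c i • v i) a) : HasSum (fun i => c i ^ 2) (‖a‖ ^ 2) := by
  have key : ∀ s : Finset ℕ, ‖∑ i ∈ s, c i • v i‖ ^ 2 = ∑ i ∈ s, c i ^ 2 := by
    intro s
    rw [← real_inner_self_eq_norm_sq, hv.inner_sum]
    simp [pow_two]
  have h2 : Tendsto (fun s : Finset ℕ => ‖∑ i ∈ s, c i • v i‖ ^ 2) atTop (𝓝 (‖a‖ ^ 2)) :=
    ha.norm.pow 2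
  exact h2.congr key

/-- for Hilbert–Schmidt operators `X, Y : U → V` with SVDs
`X = Σᵢ σᵢ^X φᵢ^X ⟨ψᵢ^X, ·⟩`, `Y = Σᵢ σᵢ^Y φᵢ^Y ⟨ψᵢ^Y, ·⟩`, where the right
singular vectors `ψ^X` form an orthonormal basis of `U`, the error term expands as
`‖Y ∘ (I − X† X)‖_HS² = Σ_{ℓ ≥ rank X} Σᵢ (σᵢ^Y ⟨ψᵢ^Y, ψ_ℓ^X⟩)²`. -/
theorem error_term_expansion {U V : Type*}
    [NormedAddCommGroup U] [InnerProductSpace ℝ U] [CompleteSpace U]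
    [NormedAddCommGroup V] [InnerProductSpace ℝ V] [CompleteSpace V]
    (X Y : U →L[ℝ] V) (hcX : IsCompactOperator X) (hcY : IsCompactOperator Y)
    (φX φY : ℕ → V) (ψX ψY : ℕ → U) (σX σY : ℕ → ℝ)
    (hφX : Orthonormal ℝ φX) (hφY : Orthonormal ℝ φY)
    (hψX : Orthonormal ℝ ψX) (hψY : Orthonormal ℝ ψY)
    (hσX : ∀ i, 0 ≤ σX i) (hσY : ∀ i, 0 ≤ σY i)
    (hX : ∀ u, X u = ∑' i, σX i • ((inner ℝ (ψX i) u : ℝ) • φX i))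
    (hY : ∀ u, Y u = ∑' i, σY i • ((inner ℝ (ψY i) u : ℝ) • φY i))
    (e : HilbertBasis ℕ ℝ U) (he : ∀ i, e i = ψX i)
    (hYHS : Summable fun i => ‖Y (e i)‖ ^ 2)
    (Xd : V →L[ℝ] U)
    (hXd : ∀ v, Xd v =
      ∑' i, (if 0 < σX i then (σX i)⁻¹ else 0) • ((inner ℝ (φX i) v : ℝ) • ψX i))
    (r : ℕ) (hrpos : ∀ i, i < r → 0 < σX i) (hrzero : ∀ i, r ≤ i → σX i = 0) :
    ∑' ℓ, ‖Y (e ℓ) - Y (Xd (X (e ℓ)))‖ ^ 2 =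
      ∑' ℓ : {ℓ : ℕ // r ≤ ℓ}, ∑' i, (σY i * (inner ℝ (ψY i) (ψX (ℓ : ℕ)) : ℝ)) ^ 2 := by
  classical
  have hXe : ∀ ℓ, X (e ℓ) = σX ℓ • φX ℓ := by
    intro ℓ
    rw [he, hX, tsum_eq_single ℓ]
    · rw [orthonormal_iff_ite.mp hψX]; simp
    · intro i hi
      rw [orthonormal_iff_ite.mp hψX]; simp [hi]
  have hXdX : ∀ ℓ, Xd (X (e ℓ)) = if ℓ < r then e ℓ else 0 := by
    intro ℓ
    rw [hXe, hXd, tsum_eq_single ℓ]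
    · rw [inner_smul_right, orthonormal_iff_ite.mp hφX]
      by_cases h : ℓ < r
      · simp [h, hrpos ℓ h, smul_smul, inv_mul_cancel₀ (hrpos ℓ h).ne', he]
      · simp [h, hrzero ℓ (not_lt.mp h)]
    · intro i hi
      rw [inner_smul_right, orthonormal_iff_ite.mp hφX]
      simp [hi]
  have hterm : ∀ ℓ, ‖Y (e ℓ) - Y (Xd (X (e ℓ)))‖ ^ 2 =
      if ℓ < r then 0 else ‖Y (ψX ℓ)‖ ^ 2 := by
    intro ℓ
    rw [hXdX]
    by_cases h : ℓ < r
    · simp [h]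
    · simp [h, he]
  have key : ∀ u : U, ‖Y u‖ ^ 2 = ∑' i, (σY i * (inner ℝ (ψY i) u : ℝ)) ^ 2 := by
    intro u
    have hYu : Y u = ∑' i, (σY i * (inner ℝ (ψY i) u : ℝ)) • φY i := by
      rw [hY u]
      exact tsum_congr fun i => (smul_smul _ _ _)
    by_cases hs : Summable fun i => (σY i * (inner ℝ (ψY i) u : ℝ)) • φY i
    · have hp := myParseval hφY hs.hasSum
      rw [hYu]
      exact hp.tsum_eq.symm
    · have h0 : Y u = 0 := by rw [hYu, tsum_eq_zero_of_not_summable hs]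
      have h2 : ¬ Summable fun i => (σY i * (inner ℝ (ψY i) u : ℝ)) ^ 2 := by
        intro h2
        apply hs
        have := (hφY.orthogonalFamily.summable_iff_norm_sq_summable
          (fun i => (σY i * (inner ℝ (ψY i) u : ℝ)))).mpr
          (by simpa [Real.norm_eq_abs, abs_mul, mul_pow, sq_abs] using h2)
        simpa [LinearIsometry.toSpanSingleton_apply] using this
      rw [h0, tsum_eq_zero_of_not_summable h2]
      simp
  calc ∑' ℓ, ‖Y (e ℓ) - Y (Xd (X (e ℓ)))‖ ^ 2
      = ∑' ℓ : {ℓ : ℕ // r ≤ ℓ}, ‖Y (e ℓ) - Y (Xd (X (e ℓ)))‖ ^ 2 := by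
        refine (tsum_subtype_eq_of_support_subset ?_).symm
        intro ℓ hℓ
        by_contra hr
        exact hℓ ((hterm ℓ).trans (if_pos (not_le.mp hr)))
    _ = ∑' ℓ : {ℓ : ℕ // r ≤ ℓ}, ∑' i, (σY i * (inner ℝ (ψY i) (ψX (ℓ : ℕ)) : ℝ)) ^ 2 := by
        refine tsum_congr fun ⟨ℓ, hℓ⟩ => ?_
        rw [hterm ℓ, if_neg (not_lt.mpr hℓ)]
        exact key (ψX ℓ)
end
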